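/- A finite simple graph G is a pseudoforest if and only if G admits an orientation of its edges in which every vertex has outdegree at most one. -/

import Mathlib

open SimpleGraph

section Aux

variable {V : Type} [Fintype V]

/-- edges of `G` with all endpoints inside `W`. -/
def edgesWithin (G : SimpleGraph V) (W : Set V) : Set (Sym2 V) :=
  {e | e ∈ G.edgeSet ∧ ∀ v ∈ e, v ∈ W}

lemma edgesWithin_mono (G : SimpleGraph V) {W W' : Set V} (h : W ⊆ W') :
    edgesWithin G W ⊆ edgesWithin G W' := fun e he => ⟨he.1, fun v hv => h (he.2 v hv)⟩

lemma boundary_count (G : SimpleGraph V) (c : G.ConnectedComponent) :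
    ∀ n (W : Set V), W ⊆ c.supp → W.Nonempty → (c.supp \ W).ncard = n →
      n ≤ (edgesWithin G c.supp \ edgesWithin G W).ncard := by
  intro n
  induction n with
  | zero => intro W _ _ _; exact Nat.zero_le _
  | succ n ih =>
    rintro W hWsub ⟨w, hw⟩ hcard
    obtain ⟨u, hu⟩ : (c.supp \ W).Nonempty := Set.nonempty_of_ncard_ne_zero (by omega)
    have hwc : G.connectedComponentMk w = c := (c.mem_supp_iff w).1 (hWsub hw)
    have huc : G.connectedComponentMk u = c := (c.mem_supp_iff u).1 hu.1
    obtain ⟨p⟩ : G.Reachable w u := ConnectedComponent.exact (hwc.trans huc.symm)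
    obtain ⟨d, -, hdS, hdns⟩ := p.exists_boundary_dart W hw hu.2
    have hadj : G.Adj d.fst d.snd := d.adj
    have hxc : d.fst ∈ c.supp := hWsub hdS
    have hyc : d.snd ∈ c.supp := by
      rw [ConnectedComponent.mem_supp_iff, ← (c.mem_supp_iff d.fst).1 hxc]
      exact ConnectedComponent.sound hadj.reachable.symm
    have hcard' : (c.supp \ insert d.snd W).ncard = n := by
      have h1 : c.supp \ insert d.snd W = (c.supp \ W) \ {d.snd} := by
        ext v; simp only [Set.mem_diff, Set.mem_insert_iff, Set.mem_singleton_iff]; tauto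
      have h2 : d.snd ∈ c.supp \ W := ⟨hyc, hdns⟩
      rw [h1, Set.ncard_diff_singleton_of_mem h2, hcard]
      omega
    have key := ih (insert d.snd W) (Set.insert_subset hyc hWsub)
      ⟨w, Set.mem_insert_of_mem _ hw⟩ hcard'
    set e0 : Sym2 V := s(d.fst, d.snd) with he0
    have he0mem : e0 ∈ edgesWithin G c.supp := by
      refine ⟨G.mem_edgeSet.2 hadj, fun v hv => ?_⟩
      rcases Sym2.mem_iff.1 hv with h | h <;> subst h <;> assumption
    have he0notin : e0 ∉ edgesWithin G c.supp \ edgesWithin G (insert d.snd W) := by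
      intro h
      exact h.2 ⟨G.mem_edgeSet.2 hadj, fun v hv => by
        rcases Sym2.mem_iff.1 hv with h | h <;> subst h
        · exact Set.mem_insert_of_mem _ hdS
        · exact Set.mem_insert _ _⟩
    have hsubE : insert e0 (edgesWithin G c.supp \ edgesWithin G (insert d.snd W)) ⊆
        edgesWithin G c.supp \ edgesWithin G W := by
      rintro e (rfl | he)
      · exact ⟨he0mem, fun h => hdns (h.2 d.snd (Sym2.mem_mk_right _ _))⟩
      · exact ⟨he.1, fun h => he.2 (edgesWithin_mono G (Set.subset_insert _ _) h)⟩
    calc n + 1 ≤ (edgesWithin G c.supp \ edgesWithin G (insert d.snd W)).ncard + 1 := by omega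
      _ = (insert e0 (edgesWithin G c.supp \ edgesWithin G (insert d.snd W))).ncard :=
          (Set.ncard_insert_of_notMem he0notin (Set.toFinite _)).symm
      _ ≤ _ := Set.ncard_le_ncard hsubE (Set.toFinite _)

def IsPseudoforest' (H : SimpleGraph V) : Prop :=
  ∀ c : H.ConnectedComponent, (edgesWithin H c.supp).ncard ≤ c.supp.ncard

lemma sparsity_component (G : SimpleGraph V) (hG : IsPseudoforest' G) (c : G.ConnectedComponent)
    (W : Set V) (hWsub : W ⊆ c.supp) : (edgesWithin G W).ncard ≤ W.ncard := by
  rcases W.eq_empty_or_nonempty with rfl | hne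
  · have h : edgesWithin G ∅ = ∅ := by
      ext e
      simp only [edgesWithin, Set.mem_setOf_eq, Set.mem_empty_iff_false, iff_false, not_and]
      intro _ h
      induction e using Sym2.ind with
      | _ x y => exact (h x (Sym2.mem_mk_left x y)).elim
    simp [h]
  · have hb := boundary_count G c (c.supp \ W).ncard W hWsub hne rfl
    have hdiff : (edgesWithin G c.supp \ edgesWithin G W).ncard
        = (edgesWithin G c.supp).ncard - (edgesWithin G W).ncard :=
      Set.ncard_diff (edgesWithin_mono G hWsub) (Set.toFinite _)
    have h1 : (c.supp \ W).ncard = c.supp.ncard - W.ncard :=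
      Set.ncard_diff hWsub (Set.toFinite _)
    have h2 : (edgesWithin G c.supp).ncard ≤ c.supp.ncard := hG c
    have h3 : (edgesWithin G W).ncard ≤ (edgesWithin G c.supp).ncard :=
      Set.ncard_le_ncard (edgesWithin_mono G hWsub) (Set.toFinite _)
    have h4 : W.ncard ≤ c.supp.ncard := Set.ncard_le_ncard hWsub (Set.toFinite _)
    omega

lemma sparsity (G : SimpleGraph V) (hG : IsPseudoforest' G) :
    ∀ n (S : Set (Sym2 V)), S.ncard = n → S ⊆ G.edgeSet →
      S.ncard ≤ {v | ∃ e ∈ S, v ∈ e}.ncard := by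
  intro n
  induction n using Nat.strong_induction_on with
  | _ n ih =>
    intro S hcard hSE
    rcases S.eq_empty_or_nonempty with rfl | ⟨e0, he0⟩
    · simp
    · set H := SimpleGraph.fromEdgeSet S with hH
      have hHle : H ≤ G := by
        intro a b hab
        rw [hH, fromEdgeSet_adj] at hab
        exact G.mem_edgeSet.1 (hSE hab.1)
      -- pick a vertex of e0
      set x0 : V := e0.out.1 with hx0
      have hx0mem : x0 ∈ e0 := Sym2.out_fst_mem e0
      set d := H.connectedComponentMk x0 with hd
      -- all-or-none : any two vertices of an edge of S are in the same H-component
      have claim : ∀ e ∈ S, ∀ x ∈ e, ∀ y ∈ e,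
          H.connectedComponentMk x = H.connectedComponentMk y := by
        intro e heS x hx y hy
        by_cases hxy : x = y
        · rw [hxy]
        · have hadj : H.Adj x y := by
            rw [hH, fromEdgeSet_adj]
            refine ⟨?_, hxy⟩
            have : e = s(x, y) := (Sym2.eq_of_ne_mem hxy hx hy
              (Sym2.mem_mk_left x y) (Sym2.mem_mk_right x y))
            rwa [← this]
          exact ConnectedComponent.sound hadj.reachable
      set S1 : Set (Sym2 V) := {e ∈ S | ∀ v ∈ e, v ∈ d.supp} with hS1
      set S2 : Set (Sym2 V) := {e | e ∈ S ∧ e ∉ S1} with hS2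
      have he0S1 : e0 ∈ S1 := by
        refine ⟨he0, fun v hv => ?_⟩
        rw [ConnectedComponent.mem_supp_iff, hd]
        exact claim e0 he0 v hv x0 hx0mem
      -- S2 is smaller
      have hS2lt : S2.ncard < n := by
        have hsub : S2 ⊆ S \ {e0} := fun e he => ⟨he.1, fun h => he.2 (h ▸ he0S1)⟩
        have := Set.ncard_le_ncard hsub (Set.toFinite _)
        have hdel : (S \ {e0}).ncard = S.ncard - 1 :=
          Set.ncard_diff_singleton_of_mem he0
        have hpos : 0 < S.ncard := (Set.ncard_pos (Set.toFinite _)).2 ⟨e0, he0⟩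
        omega
      have ih2 := ih S2.ncard hS2lt S2 rfl (fun e he => hSE he.1)
      -- S1 bound through the component of G containing x0
      set c := G.connectedComponentMk x0 with hc
      set W1 : Set V := {v | ∃ e ∈ S1, v ∈ e} with hW1
      have hW1sub : W1 ⊆ c.supp := by
        rintro v ⟨e, heS1, hve⟩
        have hvd : v ∈ d.supp := heS1.2 v hve
        rw [ConnectedComponent.mem_supp_iff, hd] at hvd
        have hreach : H.Reachable x0 v := ConnectedComponent.exact hvd.symm
        rw [ConnectedComponent.mem_supp_iff, hc]
        exact (ConnectedComponent.sound (hreach.mono hHle)).symm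
      have hS1sub : S1 ⊆ edgesWithin G W1 := by
        intro e he
        exact ⟨hSE he.1, fun v hv => ⟨e, he, hv⟩⟩
      have hS1bound : S1.ncard ≤ W1.ncard :=
        le_trans (Set.ncard_le_ncard hS1sub (Set.toFinite _))
          (sparsity_component G hG c W1 hW1sub)
      -- disjointness of vertex sets
      set W2 : Set V := {v | ∃ e ∈ S2, v ∈ e} with hW2
      have hdisj : Disjoint W1 W2 := by
        rw [Set.disjoint_left]
        rintro v ⟨e1, he1, hv1⟩ ⟨e2, he2, hv2⟩
        apply he2.2
        refine ⟨he2.1, fun w hw => ?_⟩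
        have h1 : v ∈ d.supp := he1.2 v hv1
        rw [ConnectedComponent.mem_supp_iff] at h1 ⊢
        rw [← h1]
        exact claim e2 he2.1 w hw v hv2
      have hScard : S.ncard = S1.ncard + S2.ncard := by
        have hunion : S = S1 ∪ S2 := by
          ext e; constructor
          · intro he
            by_cases h : e ∈ S1
            · exact Or.inl h
            · exact Or.inr ⟨he, h⟩
          · rintro (he | he)
            · exact he.1
            · exact he.1
        have hdisjS : Disjoint S1 S2 := by
          rw [Set.disjoint_left]
          rintro e he1 he2
          exact he2.2 he1
        rw [hunion, Set.ncard_union_eq hdisjS (Set.toFinite _) (Set.toFinite _)]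
      have hVcard : {v | ∃ e ∈ S, v ∈ e}.ncard = W1.ncard + W2.ncard := by
        have hunion : {v | ∃ e ∈ S, v ∈ e} = W1 ∪ W2 := by
          ext v
          simp only [hW1, hW2, Set.mem_setOf_eq, Set.mem_union]
          constructor
          · rintro ⟨e, he, hv⟩
            by_cases h : e ∈ S1
            · exact Or.inl ⟨e, h, hv⟩
            · exact Or.inr ⟨e, ⟨he, h⟩, hv⟩
          · rintro (⟨e, he, hv⟩ | ⟨e, he, hv⟩)
            · exact ⟨e, he.1, hv⟩
            · exact ⟨e, he.1, hv⟩
        rw [hunion, Set.ncard_union_eq hdisj (Set.toFinite _) (Set.toFinite _)]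
      omega

end Aux

/-- The set of edges of the connected component `c` of the graph `H`. -/
def compEdges {V : Type*} (H : SimpleGraph V) (c : H.ConnectedComponent) : Set (Sym2 V) :=
  {e | e ∈ H.edgeSet ∧ ∀ v ∈ e, v ∈ c.supp}

/-- A graph is a pseudoforest if every connected component has at most as many
edges as vertices (equivalently, every component contains at most one cycle). -/
def IsPseudoforest {V : Type*} (H : SimpleGraph V) : Prop :=
  ∀ c : H.ConnectedComponent, (compEdges H c).ncard ≤ c.supp.ncard

/-- `o` is an orientation of `G`: it assigns to each edge one of its endpoints as head. -/
def IsOrientation {V : Type*} (G : SimpleGraph V) (o : Sym2 V → V) : Prop :=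
  ∀ e ∈ G.edgeSet, o e ∈ e

/-- The outdegree of `v` under orientation `o`: the number of edges incident to `v`
that are oriented away from `v` (i.e. whose head is not `v`). -/
noncomputable def outDeg {V : Type*} (G : SimpleGraph V) (o : Sym2 V → V) (v : V) : ℕ :=
  {e | e ∈ G.edgeSet ∧ v ∈ e ∧ o e ≠ v}.ncard

theorem pseudoforest_iff_orientation_outdegree_le_one
    (V : Type) [Fintype V] (G : SimpleGraph V) :
    IsPseudoforest G ↔
      ∃ o : Sym2 V → V, IsOrientation G o ∧ ∀ v : V, outDeg G o v ≤ 1 := by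
  classical
  constructor
  · intro hG
    have hG' : IsPseudoforest' G := hG
    set t : G.edgeSet → Finset V := fun e => (Set.toFinite {v | v ∈ e.val}).toFinset with ht
    have hhall : ∀ s : Finset G.edgeSet, s.card ≤ (s.biUnion t).card := by
      intro s
      set S : Set (Sym2 V) := Subtype.val '' (↑s : Set G.edgeSet) with hS
      have hScard : S.ncard = s.card := by
        rw [hS, Set.ncard_image_of_injective _ Subtype.val_injective, Set.ncard_coe_finset]
      have hSsub : S ⊆ G.edgeSet := by rintro e ⟨⟨e', he'⟩, _, rfl⟩; exact he'
      have hV : {v | ∃ e ∈ S, v ∈ e} = ↑(s.biUnion t) := by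
        ext v
        simp only [Set.mem_setOf_eq, Finset.coe_biUnion, Set.mem_iUnion, Finset.mem_coe]
        constructor
        · rintro ⟨e, ⟨ee, hee, rfl⟩, hv⟩
          exact ⟨ee, hee, by rw [ht]; exact (Set.Finite.mem_toFinset _).2 hv⟩
        · rintro ⟨ee, hee, hv⟩
          rw [ht] at hv
          exact ⟨ee.val, ⟨ee, hee, rfl⟩, (Set.Finite.mem_toFinset _).1 hv⟩
      have hsp := sparsity G hG' S.ncard S rfl hSsub
      rw [hScard, hV, Set.ncard_coe_finset] at hsp
      exact hsp
    obtain ⟨f, hfinj, hft⟩ := (Finset.all_card_le_biUnion_card_iff_exists_injective t).1 hhall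
    have hfmem : ∀ e : G.edgeSet, f e ∈ e.val := fun e => by
      have h := hft e
      rw [ht] at h
      exact (Set.Finite.mem_toFinset _).1 h
    refine ⟨fun e => if h : e ∈ G.edgeSet then Sym2.Mem.other (hfmem ⟨e, h⟩) else e.out.1,
      ?_, ?_⟩
    · intro e he
      simp only [dif_pos he]
      exact Sym2.other_mem _
    · intro v
      have key : ∀ e (he : e ∈ G.edgeSet), v ∈ e →
          (if h : e ∈ G.edgeSet then Sym2.Mem.other (hfmem ⟨e, h⟩) else e.out.1) ≠ v →
          f ⟨e, he⟩ = v := by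
        intro e he hv hne
        rw [dif_pos he] at hne
        have hspec : s(f ⟨e, he⟩, Sym2.Mem.other (hfmem ⟨e, he⟩)) = e :=
          Sym2.other_spec (hfmem ⟨e, he⟩)
        rw [← hspec] at hv
        rcases Sym2.mem_iff.1 hv with h | h
        · exact h.symm
        · exact absurd h.symm hne
      have hle : {e | e ∈ G.edgeSet ∧ v ∈ e ∧
          (if h : e ∈ G.edgeSet then Sym2.Mem.other (hfmem ⟨e, h⟩) else e.out.1) ≠ v}.ncard ≤ 1 := by
        refine (Set.ncard_le_one (Set.toFinite _)).2 ?_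
        rintro a ⟨ha1, ha2, ha3⟩ b ⟨hb1, hb2, hb3⟩
        have h1 := key a ha1 ha2 ha3
        have h2 := key b hb1 hb2 hb3
        have := hfinj (h1.trans h2.symm)
        exact Subtype.ext_iff.1 this
      exact hle
  · rintro ⟨o, ho, hdeg⟩ c
    set g : Sym2 V → V :=
      fun e => if h : e ∈ G.edgeSet then Sym2.Mem.other (ho e h) else e.out.1 with hg
    apply Set.ncard_le_ncard_of_injOn g ?_ ?_ (Set.toFinite _)
    · rintro e ⟨he, hsupp⟩
      have : g e = Sym2.Mem.other (ho e he) := by rw [hg]; simp only [dif_pos he]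
      rw [this]
      exact hsupp _ (Sym2.other_mem _)
    · rintro e1 ⟨he1, hs1⟩ e2 ⟨he2, hs2⟩ heq
      set v := g e1 with hv
      have hmem : ∀ e, e ∈ G.edgeSet → g e = v →
          e ∈ {e | e ∈ G.edgeSet ∧ v ∈ e ∧ o e ≠ v} := by
        intro e he hgev
        have hge : g e = Sym2.Mem.other (ho e he) := by rw [hg]; simp only [dif_pos he]
        refine ⟨he, ?_, ?_⟩
        · rw [← hgev, hge]
          exact Sym2.other_mem _
        · rw [← hgev, hge]
          exact (Sym2.other_ne (G.not_isDiag_of_mem_edgeSet he) (ho e he)).symm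
      have hd : {e | e ∈ G.edgeSet ∧ v ∈ e ∧ o e ≠ v}.ncard ≤ 1 := hdeg v
      exact (Set.ncard_le_one (Set.toFinite _)).1 hd e1
        (hmem e1 he1 rfl) e2 (hmem e2 he2 heq.symm)
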